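/- Let u_1,...,u_k ∈ ℂ^{2n} satisfy u_i† u_j = δ_{ij} and u_iᵗ ω u_j = 0, where ω is a real matrix with ω² = −I and ωᵗ = −ω. Define μ = Σⱼ (uⱼ uⱼ† + ω uⱼ* uⱼᵗ ω). Then each u_i is an eigenvector of μ with eigenvalue 1, each ω u_i* is an eigenvector with eigenvalue −1, and μ annihilates the orthogonal complement of span{u_i, ω u_i*}. -/
import Mathlib

open Matrix

section Aux

variable {m : Type*} [Fintype m]

lemma aux_vecMulVec_mulVec (a b x : m → ℂ) :
    (vecMulVec a b).mulVec x = (b ⬝ᵥ x) • a := by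
  funext i
  simp [Matrix.mulVec, vecMulVec_apply, dotProduct, Finset.mul_sum, mul_comm, mul_left_comm]

lemma aux_sum_mulVec {k : ℕ} (A : Fin k → Matrix m m ℂ) (x : m → ℂ) :
    (∑ j, A j).mulVec x = ∑ j, (A j).mulVec x := by
  funext i
  simp only [Matrix.mulVec, dotProduct, Matrix.sum_apply, Finset.sum_apply, Finset.sum_mul]
  rw [Finset.sum_comm]

lemma aux_star_mulVec (ω : Matrix m m ℂ) (hreal : ∀ i j, star (ω i j) = ω i j)
    (v : m → ℂ) : star (ω.mulVec v) = ω.mulVec (star v) := by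
  funext i
  simp [Matrix.mulVec, dotProduct, star_sum, hreal]

lemma aux_star_dot (a b : m → ℂ) : star (a ⬝ᵥ b) = star a ⬝ᵥ star b := by
  simp [dotProduct, star_sum]

lemma aux_mul_mulVec (A B : Matrix m m ℂ) (x : m → ℂ) :
    (A * B).mulVec x = A.mulVec (B.mulVec x) := by
  rw [← Matrix.mulVec_mulVec]

end Aux

/-- Eigenstructure of the symplectic Grassmannian moment map: let `ω` be a real matrix on
`ℂ^{2n}` with `ω² = −1` and `ωᵗ = −ω`, and let `u₁, …, u_k` be an `ω`-isotropic orthonormal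
family.  Then `μ = Σⱼ (uⱼ uⱼ† + ω uⱼ* uⱼᵗ ω)` has each `uᵢ` as an eigenvector with
eigenvalue `1`, each `ω uᵢ*` as an eigenvector with eigenvalue `−1`, and annihilates the
orthogonal complement of the span of the `uᵢ` and `ω uᵢ*`. -/
theorem symplectic_moment_map_eigenstructure {n k : ℕ}
    (ω : Matrix (Fin (2 * n)) (Fin (2 * n)) ℂ)
    (hreal : ∀ i j, star (ω i j) = ω i j)
    (hω2 : ω * ω = -1) (hωt : ω.transpose = -ω)
    (u : Fin k → (Fin (2 * n) → ℂ))
    (horth : ∀ i j, star (u i) ⬝ᵥ u j = if i = j then 1 else 0)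
    (hiso : ∀ i j, u i ⬝ᵥ ω.mulVec (u j) = 0)
    (μ : Matrix (Fin (2 * n)) (Fin (2 * n)) ℂ)
    (hμ : μ = ∑ j, (vecMulVec (u j) (star (u j)) +
      ω * vecMulVec (star (u j)) (u j) * ω)) :
    (∀ i, μ.mulVec (u i) = u i) ∧
    (∀ i, μ.mulVec (ω.mulVec (star (u i))) = -(ω.mulVec (star (u i)))) ∧
    (∀ x : Fin (2 * n) → ℂ,
      (∀ i, star (u i) ⬝ᵥ x = 0 ∧ star (ω.mulVec (star (u i))) ⬝ᵥ x = 0) →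
      μ.mulVec x = 0) := by
  have key : ∀ x, μ.mulVec x =
      ∑ j, ((star (u j) ⬝ᵥ x) • u j +
        (u j ⬝ᵥ ω.mulVec x) • ω.mulVec (star (u j))) := by
    intro x
    rw [hμ, aux_sum_mulVec]
    refine Finset.sum_congr rfl fun j _ => ?_
    rw [Matrix.add_mulVec, aux_vecMulVec_mulVec, aux_mul_mulVec, aux_mul_mulVec,
      aux_vecMulVec_mulVec, Matrix.mulVec_smul]
  refine ⟨fun i => ?_, fun i => ?_, fun x hx => ?_⟩
  · rw [key]
    simp only [hiso, horth, zero_smul, add_zero, ite_smul, one_smul, zero_smul]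
    simp [eq_comm]
  · rw [key]
    have h1 : ∀ j, star (u j) ⬝ᵥ ω.mulVec (star (u i)) = 0 := by
      intro j
      have := congrArg star (hiso j i)
      rwa [aux_star_dot, aux_star_mulVec ω hreal, star_zero] at this
    have h2 : ∀ j, u j ⬝ᵥ ω.mulVec (ω.mulVec (star (u i))) =
        -(if j = i then 1 else 0) := by
      intro j
      rw [← aux_mul_mulVec, hω2]
      have := congrArg star (horth j i)
      rw [aux_star_dot, star_star] at this
      simp only [Matrix.neg_mulVec, Matrix.one_mulVec, dotProduct_neg, neg_inj, this]
      simp [apply_ite (star : ℂ → ℂ)]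
    simp only [h1, h2, zero_smul, zero_add, neg_smul, ite_smul, one_smul, zero_smul]
    simp [eq_comm]
  · rw [key]
    have h2 : ∀ j, u j ⬝ᵥ ω.mulVec x = 0 := by
      intro j
      have h := (hx j).2
      rw [aux_star_mulVec ω hreal, star_star] at h
      have : ω.mulVec (u j) ⬝ᵥ x = u j ⬝ᵥ ω.transpose.mulVec x := by
        rw [Matrix.dotProduct_mulVec, Matrix.vecMul_transpose]
      rw [this, hωt, Matrix.neg_mulVec, dotProduct_neg, neg_eq_zero] at h
      exact h
    simp [h2, (hx _).1]
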